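/- Let Ω, U, λ, u be as in the setting, and let z₀ ∈ closure(Ω) satisfy u(z₀) = 0 and ∇u(z₀) = 0. Then (a) z₀ is an isolated critical point of u: there exists ε > 0 such that z₀ is the only point w in the open ball of radius ε around z₀ with ∇u(w) = 0; and (b) z₀ is neither a local minimum point nor a local maximum point of u (i.e., neither IsLocalMin u z₀ nor IsLocalMax u z₀ holds). -/

import Mathlib

open Metric Set Filter Topology MeasureTheory

noncomputable section

abbrev E2 := EuclideanSpace ℝ (Fin 2)

/-- The Laplacian of `u`: the sum of the two pure second partial derivatives. -/
def lap (u : E2 → ℝ) (z : E2) : ℝ :=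
  ∑ i : Fin 2, iteratedFDeriv ℝ 2 u z (fun _ => EuclideanSpace.single i 1)

/-- directional derivative operator -/
def Dv (v : E2) (g : E2 → ℝ) : E2 → ℝ := fun z => fderiv ℝ g z v

variable {U : Set E2} {g h : E2 → ℝ} {v w : E2}

lemma Dv.analytic (hg : AnalyticOnNhd ℝ g U) (v : E2) : AnalyticOnNhd ℝ (Dv v g) U :=
  (ContinuousLinearMap.apply ℝ ℝ v).comp_analyticOnNhd hg.fderiv

lemma Dv.congr (hUo : IsOpen U) (hgh : EqOn g h U) {z : E2} (hz : z ∈ U) :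
    Dv v g z = Dv v h z := by
  have : g =ᶠ[𝓝 z] h := eventually_of_mem (hUo.mem_nhds hz) hgh
  simp only [Dv, this.fderiv_eq]

lemma Dv.congr_iter (hUo : IsOpen U) (hgh : EqOn g h U) (n : ℕ) :
    EqOn ((Dv v)^[n] g) ((Dv v)^[n] h) U := by
  induction n with
  | zero => exact hgh
  | succ n ih =>
    intro z hz
    rw [Function.iterate_succ_apply', Function.iterate_succ_apply']
    exact Dv.congr hUo ih hz

-- Schwarz
lemma Dv.comm (hUo : IsOpen U) (hg : AnalyticOnNhd ℝ g U) {z : E2} (hz : z ∈ U) :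
    Dv v (Dv w g) z = Dv w (Dv v g) z := by
  have hsymm : IsSymmSndFDerivAt ℝ g z := ((hg z hz).contDiffAt).isSymmSndFDerivAt le_top
  have hdf : ∀ x ∈ U, DifferentiableAt ℝ (fderiv ℝ g) x := fun x hx =>
    ((hg.fderiv) x hx).differentiableAt
  have key : ∀ a : E2, Dv a g = fun y => (fderiv ℝ g y) a := fun a => rfl
  have h1 : ∀ a b : E2, Dv a (Dv b g) z = fderiv ℝ (fderiv ℝ g) z a b := by
    intro a b
    have : Dv a (Dv b g) z = fderiv ℝ (fun y => (fderiv ℝ g y) b) z a := rfl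
    rw [this, fderiv_clm_apply (hdf z hz) (differentiableAt_const b)]
    simp
  rw [h1, h1, hsymm.eq]

lemma Dv.add (hgz : DifferentiableAt ℝ g z) (hhz : DifferentiableAt ℝ h z) :
    Dv v (fun y => g y + h y) z = Dv v g z + Dv v h z := by
  simp [Dv, fderiv_fun_add hgz hhz]

lemma Dv.smul (c : ℝ) (hgz : DifferentiableAt ℝ g z) :
    Dv v (fun y => c * g y) z = c * Dv v g z := by
  simp [Dv, fderiv_const_mul hgz c]

lemma Dv.dir_linear (a b : ℝ) (v w : E2) (g : E2 → ℝ) (z : E2) :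
    Dv (a • v + b • w) g z = a * Dv v g z + b * Dv w g z := by
  simp [Dv]

-- iterates stay analytic
lemma Dv.analytic_iter (hg : AnalyticOnNhd ℝ g U) (v : E2) (n : ℕ) :
    AnalyticOnNhd ℝ ((Dv v)^[n] g) U := by
  induction n with
  | zero => exact hg
  | succ n ih => rw [Function.iterate_succ_apply']; exact Dv.analytic ih v

-- D_w commutes past iterates of D_v on U
lemma Dv.comm_iter (hUo : IsOpen U) (hg : AnalyticOnNhd ℝ g U) (v w : E2) (k : ℕ) :
    EqOn ((Dv w)^[k] (Dv v g)) (Dv v ((Dv w)^[k] g)) U := by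
  induction k with
  | zero => exact fun z _ => rfl
  | succ k ih =>
    intro z hz
    rw [Function.iterate_succ_apply', Function.iterate_succ_apply']
    calc Dv w ((Dv w)^[k] (Dv v g)) z = Dv w (Dv v ((Dv w)^[k] g)) z :=
          Dv.congr hUo ih hz
      _ = Dv v (Dv w ((Dv w)^[k] g)) z := Dv.comm hUo (Dv.analytic_iter hg w k) hz

-- linear combinations through iterates on U
lemma Dv.iter_comb (hUo : IsOpen U) (hg : AnalyticOnNhd ℝ g U) (hh : AnalyticOnNhd ℝ h U)
    (a b : ℝ) (v : E2) (n : ℕ) :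
    EqOn ((Dv v)^[n] (fun y => a * g y + b * h y))
      (fun y => a * (Dv v)^[n] g y + b * (Dv v)^[n] h y) U := by
  induction n with
  | zero => exact fun z _ => rfl
  | succ n ih =>
    intro z hz
    rw [Function.iterate_succ_apply', Function.iterate_succ_apply',
      Function.iterate_succ_apply']
    have h1 : Dv v ((Dv v)^[n] (fun y => a * g y + b * h y)) z
        = Dv v (fun y => a * (Dv v)^[n] g y + b * (Dv v)^[n] h y) z := Dv.congr hUo ih hz
    rw [h1]
    have dg : DifferentiableAt ℝ ((Dv v)^[n] g) z := (Dv.analytic_iter hg v n z hz).differentiableAt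
    have dh : DifferentiableAt ℝ ((Dv v)^[n] h) z := (Dv.analytic_iter hh v n z hz).differentiableAt
    have : Dv v (fun y => a * (Dv v)^[n] g y + b * (Dv v)^[n] h y) z
        = Dv v (fun y => a * (Dv v)^[n] g y) z + Dv v (fun y => b * (Dv v)^[n] h y) z :=
      Dv.add (by fun_prop) (by fun_prop)
    rw [this, Dv.smul a dg, Dv.smul b dh]

/-- basis vectors -/
def ee (i : Fin 2) : E2 := EuclideanSpace.single i 1

/-- mixed partial derivative operator -/
def pdd (j k : ℕ) (g : E2 → ℝ) : E2 → ℝ := (Dv (ee 0))^[j] ((Dv (ee 1))^[k] g)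

lemma pdd.analytic (hg : AnalyticOnNhd ℝ g U) (j k : ℕ) : AnalyticOnNhd ℝ (pdd j k g) U :=
  Dv.analytic_iter (Dv.analytic_iter hg _ k) _ j

lemma pdd.congr (hUo : IsOpen U) (hgh : EqOn g h U) (j k : ℕ) :
    EqOn (pdd j k g) (pdd j k h) U :=
  Dv.congr_iter hUo (Dv.congr_iter hUo hgh k) j

lemma pdd.D1 (hUo : IsOpen U) (hg : AnalyticOnNhd ℝ g U) (j k : ℕ) :
    EqOn (pdd j k (Dv (ee 0) g)) (pdd (j+1) k g) U := by
  intro z hz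
  have h1 : EqOn ((Dv (ee 1))^[k] (Dv (ee 0) g)) (Dv (ee 0) ((Dv (ee 1))^[k] g)) U :=
    Dv.comm_iter hUo hg _ _ k
  have h2 := Dv.congr_iter (v := ee 0) hUo h1 j hz
  unfold pdd
  rw [h2, ← Function.iterate_succ_apply]

lemma pdd.D2 (j k : ℕ) (g : E2 → ℝ) : pdd j k (Dv (ee 1) g) = pdd j (k+1) g := by
  unfold pdd
  rw [Function.iterate_succ_apply]

lemma pdd.D1' (j k : ℕ) (g : E2 → ℝ) : Dv (ee 0) (pdd j k g) = pdd (j+1) k g := by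
  unfold pdd
  rw [Function.iterate_succ_apply']

lemma pdd.D2' (hUo : IsOpen U) (hg : AnalyticOnNhd ℝ g U) (j k : ℕ) :
    EqOn (Dv (ee 1) (pdd j k g)) (pdd j (k+1) g) U := by
  intro z hz
  have h1 : EqOn ((Dv (ee 0))^[j] (Dv (ee 1) ((Dv (ee 1))^[k] g)))
      (Dv (ee 1) ((Dv (ee 0))^[j] ((Dv (ee 1))^[k] g))) U :=
    Dv.comm_iter hUo (Dv.analytic_iter hg _ k) _ _ j
  have := (h1 hz).symm
  unfold pdd
  rw [this]
  exact congrFun (congrArg (Dv (ee 0))^[j] (Function.iterate_succ_apply' (Dv (ee 1)) k g).symm) z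

lemma pdd.comb (hUo : IsOpen U) (hg : AnalyticOnNhd ℝ g U) (hh : AnalyticOnNhd ℝ h U)
    (a b : ℝ) (j k : ℕ) :
    EqOn (pdd j k (fun y => a * g y + b * h y))
      (fun y => a * pdd j k g y + b * pdd j k h y) U := by
  intro z hz
  unfold pdd
  have h1 : EqOn ((Dv (ee 1))^[k] (fun y => a * g y + b * h y))
      (fun y => a * (Dv (ee 1))^[k] g y + b * (Dv (ee 1))^[k] h y) U :=
    Dv.iter_comb hUo hg hh a b _ k
  have h2 := Dv.congr_iter (v := ee 0) hUo h1 j hz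
  rw [h2]
  exact Dv.iter_comb hUo (Dv.analytic_iter hg _ k) (Dv.analytic_iter hh _ k) a b _ j hz

lemma ee.expand (w : E2) : w = w 0 • ee 0 + w 1 • ee 1 := by
  ext i
  fin_cases i <;> simp [ee, EuclideanSpace.single_apply] <;> rfl

lemma Dv.expand (w : E2) (g : E2 → ℝ) :
    Dv w g = fun z => w 0 * Dv (ee 0) g z + w 1 * Dv (ee 1) g z := by
  funext z
  simp only [Dv]
  conv_lhs => rw [ee.expand w]
  simp

lemma choose_sum_step (n : ℕ) (t : ℕ → ℝ) :
    ∑ j ∈ Finset.range (n+2), ((n+1).choose j : ℝ) * t j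
    = ∑ j ∈ Finset.range (n+1), (n.choose j : ℝ) * (t (j+1) + t j) := by
  rw [Finset.sum_range_succ' (fun j => ((n+1).choose j : ℝ) * t j) (n+1)]
  have h1 : ∀ j ∈ Finset.range (n+1),
      (((n+1).choose (j+1) : ℕ) : ℝ) * t (j+1)
      = (n.choose j : ℝ) * t (j+1) + (n.choose (j+1) : ℝ) * t (j+1) := by
    intro j _
    rw [Nat.choose_succ_succ]
    push_cast
    ring
  rw [Finset.sum_congr rfl h1, Finset.sum_add_distrib]
  have h2 : (∑ j ∈ Finset.range (n+1), (n.choose (j+1) : ℝ) * t (j+1))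
      + ((n+1).choose 0 : ℝ) * t 0
      = ∑ j ∈ Finset.range (n+1), (n.choose j : ℝ) * t j := by
    have e0 : (((n+1).choose 0 : ℕ) : ℝ) * t 0 = (n.choose 0 : ℝ) * t 0 := by
      simp
    rw [e0, ← Finset.sum_range_succ' (fun j => (n.choose j : ℝ) * t j) (n+1)]
    rw [Finset.sum_range_succ (fun j => (n.choose j : ℝ) * t j) (n+1)]
    simp [Nat.choose_succ_self]
  rw [add_assoc, h2, ← Finset.sum_add_distrib]
  exact Finset.sum_congr rfl fun j _ => by ring

lemma Dv.binomial (hUo : IsOpen U) (n : ℕ) :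
    ∀ (g : E2 → ℝ), AnalyticOnNhd ℝ g U → ∀ z ∈ U, ∀ w : E2,
    (Dv w)^[n] g z = ∑ j ∈ Finset.range (n+1),
      (n.choose j : ℝ) * (w 0)^j * (w 1)^(n-j) * pdd j (n-j) g z := by
  induction n with
  | zero => intro g hg z hz w; simp [pdd]
  | succ n ih =>
    intro g hg z hz w
    rw [Function.iterate_succ_apply]
    rw [ih (Dv w g) (Dv.analytic hg w) z hz w]
    have t : ℕ → ℝ := fun j => (w 0)^j * (w 1)^(n+1-j) * pdd j (n+1-j) g z
    set t : ℕ → ℝ := fun j => (w 0)^j * (w 1)^(n+1-j) * pdd j (n+1-j) g z with ht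
    have step : ∀ j ∈ Finset.range (n+1),
        (n.choose j : ℝ) * (w 0)^j * (w 1)^(n-j) * pdd j (n-j) (Dv w g) z
        = (n.choose j : ℝ) * (t (j+1) + t j) := by
      intro j hj
      have hjn : j ≤ n := Nat.lt_succ_iff.mp (Finset.mem_range.mp hj)
      have hc : pdd j (n-j) (Dv w g) z
          = w 0 * pdd (j+1) (n-j) g z + w 1 * pdd j (n-j+1) g z := by
        have h1 : pdd j (n-j) (Dv w g) z
            = w 0 * pdd j (n-j) (Dv (ee 0) g) z + w 1 * pdd j (n-j) (Dv (ee 1) g) z := by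
          rw [Dv.expand w g]
          exact pdd.comb hUo (Dv.analytic hg (ee 0)) (Dv.analytic hg (ee 1)) _ _ j (n-j) hz
        rw [h1, pdd.D1 hUo hg j (n-j) hz, pdd.D2]
      rw [hc]
      simp only [ht]
      rw [show n+1-(j+1) = n-j by omega, show n+1-j = n-j+1 by omega]
      ring
    rw [Finset.sum_congr rfl step]
    have tgt : ∀ j ∈ Finset.range (n+2),
        ((n+1).choose j : ℝ) * (w 0)^j * (w 1)^(n+1-j) * pdd j (n+1-j) g z
        = ((n+1).choose j : ℝ) * t j := by
      intro j _
      simp only [ht]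
      ring
    rw [show n+1+1 = n+2 from rfl, Finset.sum_congr rfl tgt, choose_sum_step n t]

lemma diag_iteratedFDeriv (hUo : IsOpen U) (n : ℕ) :
    ∀ (g : E2 → ℝ), AnalyticOnNhd ℝ g U → ∀ z ∈ U, ∀ w : E2,
    iteratedFDeriv ℝ n g z (fun _ => w) = (Dv w)^[n] g z := by
  induction n with
  | zero => intro g hg z hz w; simp
  | succ n ih =>
    intro g hg z hz w
    rw [iteratedFDeriv_succ_apply_right]
    have hinit : (Fin.init fun _ : Fin (n+1) => w) = fun _ : Fin n => w := rfl
    rw [hinit]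
    have hcd : ContDiffOn ℝ (n : ℕ∞) (fderiv ℝ g) U :=
      (hg.fderiv).contDiffOn hUo.uniqueDiffOn
    have key : (iteratedFDeriv ℝ n (fderiv ℝ g) z (fun _ => w)) w
        = iteratedFDeriv ℝ n (fun y => (fderiv ℝ g y) w) z (fun _ => w) := by
      rw [← iteratedFDerivWithin_of_isOpen n hUo hz, ← iteratedFDerivWithin_of_isOpen n hUo hz]
      exact (iteratedFDerivWithin_clm_apply_const_apply hUo.uniqueDiffOn hcd le_rfl hz).symm
    rw [key]
    have : iteratedFDeriv ℝ n (fun y => (fderiv ℝ g y) w) z (fun _ => w)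
        = (Dv w)^[n] (Dv w g) z := ih (Dv w g) (Dv.analytic hg w) z hz w
    rw [this, ← Function.iterate_succ_apply]

lemma taylor_bigO {g : E2 → ℝ} {z₀ : E2} (hg : AnalyticAt ℝ g z₀) (n : ℕ)
    (hvan : ∀ k, k < n → ∀ y : E2, iteratedFDeriv ℝ k g z₀ (fun _ => y) = 0) :
    (fun y => g (z₀ + y) - (n.factorial : ℝ)⁻¹ * iteratedFDeriv ℝ n g z₀ (fun _ => y))
      =O[𝓝 0] fun y => ‖y‖^(n+1) := by
  obtain ⟨p, r, hp⟩ := hg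
  have hO := hp.hasFPowerSeriesAt.isBigO_sub_partialSum_pow (n+1)
  have hps : ∀ y : E2, p.partialSum (n+1) y
      = (n.factorial : ℝ)⁻¹ * iteratedFDeriv ℝ n g z₀ (fun _ => y) := by
    intro y
    have hterm : ∀ k, k ∈ Finset.range (n+1) →
        p k (fun _ => y) = (k.factorial : ℝ)⁻¹ * iteratedFDeriv ℝ k g z₀ (fun _ => y) := by
      intro k _
      have h1 := hp.factorial_smul y k
      have h2 : (k.factorial : ℝ) ≠ 0 := Nat.cast_ne_zero.mpr k.factorial_ne_zero
      field_simp
      rw [mul_comm]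
      rw [← nsmul_eq_mul]
      exact h1
    unfold FormalMultilinearSeries.partialSum
    rw [Finset.sum_congr rfl hterm, Finset.sum_range_succ]
    have hzero : ∀ k ∈ Finset.range n,
        (k.factorial : ℝ)⁻¹ * iteratedFDeriv ℝ k g z₀ (fun _ => y) = 0 := by
      intro k hk
      rw [hvan k (Finset.mem_range.mp hk) y]
      simp
    rw [Finset.sum_congr rfl hzero]
    simp
  have : (fun y : E2 => g (z₀ + y) - (n.factorial : ℝ)⁻¹ * iteratedFDeriv ℝ n g z₀ (fun _ => y))
      = fun y => g (z₀ + y) - p.partialSum (n+1) y := by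
    funext y; rw [hps y]
  rw [this]
  exact hO

/-- embed E2 into ℂ -/
def zc (w : E2) : ℂ := (w 0 : ℂ) + (w 1 : ℂ) * Complex.I

lemma zc_abs (w : E2) : ‖zc w‖ = ‖w‖ := by
  rw [EuclideanSpace.norm_eq]
  rw [Complex.norm_def, Complex.normSq_apply]
  simp [zc, Fin.sum_univ_two, Real.norm_eq_abs, sq_abs]
  ring_nf

lemma zc_smul (t : ℝ) (w : E2) : zc (t • w) = (t : ℂ) * zc w := by
  simp [zc, PiLp.smul_apply, smul_eq_mul]
  push_cast
  ring

lemma poly_re (n : ℕ) (d : ℂ) (coef : ℕ → ℝ)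
    (hco : ∀ j, j ≤ n → coef j = (d * Complex.I^(n-j)).re) (w : E2) :
    ∑ j ∈ Finset.range (n+1), (n.choose j : ℝ) * (w 0)^j * (w 1)^(n-j) * coef j
      = (d * (zc w)^n).re := by
  have hpow : (zc w)^n = ∑ j ∈ Finset.range (n+1),
      (w 0 : ℂ)^j * ((w 1 : ℂ) * Complex.I)^(n-j) * (n.choose j : ℂ) := add_pow _ _ n
  rw [zc] at hpow ⊢
  rw [hpow, Finset.mul_sum, Complex.re_sum]
  refine Finset.sum_congr rfl fun j hj => ?_
  have hjn : j ≤ n := Nat.lt_succ_iff.mp (Finset.mem_range.mp hj)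
  rw [hco j hjn]
  have : d * ((w 0 : ℂ)^j * ((w 1 : ℂ) * Complex.I)^(n-j) * (n.choose j : ℂ))
      = ((((n.choose j : ℝ)) * (w 0)^j * (w 1)^(n-j) : ℝ) : ℂ) * (d * Complex.I^(n-j)) := by
    push_cast
    ring
  rw [this, Complex.re_ofReal_mul]

lemma pde_step (hUo : IsOpen U) {F1 F2 F3 : E2 → ℝ} (h1 : AnalyticOnNhd ℝ F1 U)
    (h2 : AnalyticOnNhd ℝ F2 U) (h3 : AnalyticOnNhd ℝ F3 U) (lam : ℝ) (v : E2)
    (hz : ∀ z ∈ U, F1 z + F2 z + lam * F3 z = 0) :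
    ∀ z ∈ U, Dv v F1 z + Dv v F2 z + lam * Dv v F3 z = 0 := by
  intro z hzU
  have hd1 := (h1 z hzU).differentiableAt
  have hd2 := (h2 z hzU).differentiableAt
  have hd3 := (h3 z hzU).differentiableAt
  have hcomb : Dv v (fun y => F1 y + F2 y + lam * F3 y) z
      = Dv v F1 z + Dv v F2 z + lam * Dv v F3 z := by
    rw [show (fun y => F1 y + F2 y + lam * F3 y)
        = fun y => (F1 y + F2 y) + lam * F3 y from rfl]
    rw [Dv.add (by fun_prop) (by fun_prop), Dv.add hd1 hd2, Dv.smul lam hd3]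
  rw [← hcomb]
  have hev : (fun y => F1 y + F2 y + lam * F3 y) =ᶠ[𝓝 z] (fun _ => 0) :=
    eventually_of_mem (hUo.mem_nhds hzU) hz
  unfold Dv
  rw [hev.fderiv_eq]
  simp

lemma pde_iter (hUo : IsOpen U) {u : E2 → ℝ} (hu : AnalyticOnNhd ℝ u U) (lam : ℝ)
    (heq2 : ∀ z ∈ U, pdd 2 0 u z + pdd 0 2 u z + lam * u z = 0) :
    ∀ j k, ∀ z ∈ U, pdd (j+2) k u z + pdd j (k+2) u z + lam * pdd j k u z = 0 := by
  have base : ∀ k, ∀ z ∈ U, pdd 2 k u z + pdd 0 (k+2) u z + lam * pdd 0 k u z = 0 := by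
    intro k
    induction k with
    | zero => exact heq2
    | succ k ih =>
      intro z hz
      have h := pde_step hUo (pdd.analytic hu 2 k) (pdd.analytic hu 0 (k+2))
        (pdd.analytic hu 0 k) lam (ee 1) ih z hz
      rwa [pdd.D2' hUo hu 2 k hz, pdd.D2' hUo hu 0 (k+2) hz, pdd.D2' hUo hu 0 k hz] at h
  intro j
  induction j with
  | zero => exact base
  | succ j ih =>
    intro k z hz
    have h := pde_step hUo (pdd.analytic hu (j+2) k) (pdd.analytic hu j (k+2))
      (pdd.analytic hu j k) lam (ee 0) (ih k) z hz
    rwa [pdd.D1', pdd.D1', pdd.D1'] at h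

lemma grad_zero_fderiv {f : E2 → ℝ} {x : E2} (h : gradient f x = 0) : fderiv ℝ f x = 0 := by
  have h' : (InnerProductSpace.toDual ℝ E2).symm (fderiv ℝ f x) = 0 := h
  calc fderiv ℝ f x
      = (InnerProductSpace.toDual ℝ E2) ((InnerProductSpace.toDual ℝ E2).symm (fderiv ℝ f x)) :=
        (LinearIsometryEquiv.apply_symm_apply _ _).symm
    _ = 0 := by rw [h']; exact map_zero _

/-- Every singular point of `u` in `closure Ω` is an isolated critical point and
is neither a local minimum nor a local maximum point of `u`. -/
theorem singular_point_isolated_saddle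
    (Ω U : Set E2) (hΩne : Ω.Nonempty) (hΩo : IsOpen Ω)
    (hΩb : Bornology.IsBounded Ω)
    (hUo : IsOpen U) (hUconn : IsConnected U) (hsub : closure Ω ⊆ U)
    (lam : ℝ) (hlam : 0 < lam)
    (u : E2 → ℝ) (hu : AnalyticOnNhd ℝ u U)
    (hne : ∃ z ∈ U, u z ≠ 0)
    (heq : ∀ z ∈ U, lap u z + lam * u z = 0)
    (z₀ : E2) (hz₀ : z₀ ∈ closure Ω) (hu0 : u z₀ = 0) (hg0 : gradient u z₀ = 0) :
    (∃ ε > 0, ∀ w ∈ ball z₀ ε, gradient u w = 0 → w = z₀) ∧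
      ¬ IsLocalMin u z₀ ∧ ¬ IsLocalMax u z₀ := by
  classical
  have hz₀U : z₀ ∈ U := hsub hz₀
  set a : ℕ → ℕ → ℝ := fun j k => pdd j k u z₀ with ha
  -- existence of a nonvanishing mixed partial
  have hex : ∃ n, ∃ j k, j + k = n ∧ a j k ≠ 0 := by
    by_contra hcon
    push_neg at hcon
    have hall : ∀ j k, a j k = 0 := fun j k => hcon (j + k) j k rfl
    have hdiag : ∀ n (w : E2), iteratedFDeriv ℝ n u z₀ (fun _ => w) = 0 := by
      intro n w
      rw [diag_iteratedFDeriv hUo n u hu z₀ hz₀U w, Dv.binomial hUo n u hu z₀ hz₀U w]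
      refine Finset.sum_eq_zero fun j hj => ?_
      rw [show pdd j (n - j) u z₀ = a j (n - j) from rfl, hall]
      ring
    obtain ⟨p, r, hp⟩ := hu z₀ hz₀U
    have hzloc : ∀ y ∈ EMetric.ball (0 : E2) r, u (z₀ + y) = 0 := by
      intro y hy
      have hs := hp.hasSum_iteratedFDeriv hy
      have hzero : (fun n => ((n.factorial : ℝ))⁻¹ • iteratedFDeriv ℝ n u z₀ fun _ => y)
          = fun _ => (0 : ℝ) := by
        funext n; rw [hdiag n y]; simp
      rw [hzero] at hs
      exact (hs.unique hasSum_zero)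
    have hev : u =ᶠ[𝓝 z₀] 0 := by
      have hball : EMetric.ball z₀ r ∈ 𝓝 z₀ := EMetric.ball_mem_nhds z₀ hp.r_pos
      filter_upwards [hball] with w hw
      have hmem : w - z₀ ∈ EMetric.ball (0 : E2) r := by
        have hw' : edist w z₀ < r := hw
        show edist (w - z₀) 0 < r
        simpa [edist_dist, dist_eq_norm] using hw'
      simpa using hzloc (w - z₀) hmem
    have hzero := hu.eqOn_zero_of_preconnected_of_eventuallyEq_zero
      hUconn.isPreconnected hz₀U hev
    obtain ⟨z, hzU, hne'⟩ := hne
    exact hne' (hzero hzU)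
  set N := Nat.find hex with hNdef
  obtain ⟨j₀, k₀, hjk₀, hane₀⟩ := Nat.find_spec hex
  have hvan_a : ∀ j k, j + k < N → a j k = 0 := by
    intro j k h
    by_contra hne'
    exact Nat.find_min hex h ⟨j, k, rfl, hne'⟩
  have hfd0 : fderiv ℝ u z₀ = 0 := grad_zero_fderiv hg0
  have ha00 : a 0 0 = 0 := hu0
  have ha10 : a 1 0 = 0 := by
    show fderiv ℝ u z₀ (ee 0) = 0
    rw [hfd0]; rfl
  have ha01 : a 0 1 = 0 := by
    show fderiv ℝ u z₀ (ee 1) = 0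
    rw [hfd0]; rfl
  have hN2 : 2 ≤ N := by
    by_contra hlt
    push_neg at hlt
    interval_cases N
    · obtain rfl : j₀ = 0 := by omega
      obtain rfl : k₀ = 0 := by omega
      exact hane₀ ha00
    · rcases Nat.eq_zero_or_pos j₀ with rfl | hj
      · obtain rfl : k₀ = 1 := by omega
        exact hane₀ ha01
      · obtain rfl : j₀ = 1 := by omega
        obtain rfl : k₀ = 0 := by omega
        exact hane₀ ha10
  -- the PDE for all mixed partials
  have heq2 : ∀ z ∈ U, pdd 2 0 u z + pdd 0 2 u z + lam * u z = 0 := by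
    intro z hz
    have hl : lap u z = pdd 2 0 u z + pdd 0 2 u z := by
      unfold lap
      rw [Fin.sum_univ_two]
      rw [show EuclideanSpace.single (0 : Fin 2) (1:ℝ) = ee 0 from rfl,
        show EuclideanSpace.single (1 : Fin 2) (1:ℝ) = ee 1 from rfl]
      rw [diag_iteratedFDeriv hUo 2 u hu z hz (ee 0),
        diag_iteratedFDeriv hUo 2 u hu z hz (ee 1)]
      rfl
    have := heq z hz
    rw [hl] at this
    exact this
  have hpde := pde_iter hUo hu lam heq2
  have hrec : ∀ j k, j + k + 2 = N → a (j+2) k + a j (k+2) = 0 := by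
    intro j k hjk
    have h := hpde j k z₀ hz₀U
    have h0 : a j k = 0 := hvan_a j k (by omega)
    have h' : a (j+2) k + a j (k+2) + lam * a j k = 0 := h
    rw [h0] at h'
    linarith
  set b : ℕ → ℝ := fun j => a j (N - j) with hb
  set c : ℂ := ⟨b N, -(b (N-1))⟩ with hc
  have hrep : ∀ m, m ≤ N → b (N - m) = (c * Complex.I ^ m).re := by
    intro m
    induction m using Nat.strong_induction_on with
    | _ m ih =>
      match m with
      | 0 =>
        intro _
        simp [hc]
      | 1 =>
        intro h1
        rw [pow_one, Complex.mul_I_re]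
        simp [hc]
      | (m+2) =>
        intro hm2
        have hih := ih m (by omega) (by omega)
        have hpow : (c * Complex.I ^ (m+2)).re = -((c * Complex.I ^ m).re) := by
          have : c * Complex.I ^ (m+2) = -(c * Complex.I ^ m) := by
            rw [pow_succ, pow_succ]
            rw [show c * (Complex.I ^ m * Complex.I * Complex.I)
              = c * Complex.I ^ m * (Complex.I * Complex.I) by ring]
            rw [Complex.I_mul_I]
            ring
          rw [this, Complex.neg_re]
        rw [hpow, ← hih]
        -- use the recurrence
        have hr := hrec (N - (m+2)) m (by omega)
        have e1 : N - (m+2) + 2 = N - m := by omega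
        have e2 : N - (N - m) = m := by omega
        have e3 : N - (N - (m+2)) = m + 2 := by omega
        have hbm : b (N - m) = a (N - m) m := by rw [hb]; simp only []; rw [e2]
        have hbm2 : b (N - (m+2)) = a (N - (m+2)) (m+2) := by
          rw [hb]; simp only []; rw [e3]
        rw [hbm, hbm2]
        rw [e1] at hr
        linarith
  have hcne : c ≠ 0 := by
    intro hc0
    have hj₀N : j₀ ≤ N := by omega
    have hbj₀ : b j₀ = a j₀ k₀ := by
      rw [hb]; simp only []; rw [show N - j₀ = k₀ by omega]
    have := hrep (N - j₀) (by omega)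
    rw [show N - (N - j₀) = j₀ by omega] at this
    rw [hc0] at this
    simp at this
    rw [hbj₀] at this
    exact hane₀ this
  have hco_b : ∀ j, j ≤ N → b j = (c * Complex.I^(N-j)).re := by
    intro j hj
    have := hrep (N-j) (by omega)
    rwa [show N - (N-j) = j by omega] at this
  have hvan_u : ∀ k, k < N → ∀ y : E2, iteratedFDeriv ℝ k u z₀ (fun _ => y) = 0 := by
    intro k hk y
    rw [diag_iteratedFDeriv hUo k u hu z₀ hz₀U y, Dv.binomial hUo k u hu z₀ hz₀U y]
    refine Finset.sum_eq_zero fun j hj => ?_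
    have hj' : j < k + 1 := Finset.mem_range.mp hj
    rw [show pdd j (k - j) u z₀ = a j (k - j) from rfl, hvan_a j (k-j) (by omega)]
    ring
  have hvalN : ∀ w : E2, iteratedFDeriv ℝ N u z₀ (fun _ => w) = (c * (zc w)^N).re := by
    intro w
    rw [diag_iteratedFDeriv hUo N u hu z₀ hz₀U w, Dv.binomial hUo N u hu z₀ hz₀U w]
    exact poly_re N c b hco_b w
  have hOu : (fun y : E2 => u (z₀ + y) - (N.factorial : ℝ)⁻¹ * (c * (zc y)^N).re)
      =O[𝓝 0] fun y => ‖y‖^(N+1) := by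
    have h := taylor_bigO ((hu z₀ hz₀U)) N hvan_u
    simpa only [hvalN] using h
  set g1 : E2 → ℝ := Dv (ee 0) u with hg1def
  set g2 : E2 → ℝ := Dv (ee 1) u with hg2def
  have hg1U : AnalyticOnNhd ℝ g1 U := Dv.analytic hu (ee 0)
  have hg2U : AnalyticOnNhd ℝ g2 U := Dv.analytic hu (ee 1)
  have hdiag_g1 : ∀ k, ∀ w : E2, iteratedFDeriv ℝ k g1 z₀ (fun _ => w)
      = ∑ j ∈ Finset.range (k+1), (k.choose j : ℝ) * (w 0)^j * (w 1)^(k-j) * a (j+1) (k-j) := by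
    intro k w
    rw [diag_iteratedFDeriv hUo k g1 hg1U z₀ hz₀U w, Dv.binomial hUo k g1 hg1U z₀ hz₀U w]
    refine Finset.sum_congr rfl fun j hj => ?_
    rw [hg1def, pdd.D1 hUo hu j (k-j) hz₀U]
  have hdiag_g2 : ∀ k, ∀ w : E2, iteratedFDeriv ℝ k g2 z₀ (fun _ => w)
      = ∑ j ∈ Finset.range (k+1), (k.choose j : ℝ) * (w 0)^j * (w 1)^(k-j) * a j (k-j+1) := by
    intro k w
    rw [diag_iteratedFDeriv hUo k g2 hg2U z₀ hz₀U w, Dv.binomial hUo k g2 hg2U z₀ hz₀U w]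
    refine Finset.sum_congr rfl fun j hj => ?_
    rw [hg2def, pdd.D2]
  have hvan_g1 : ∀ k, k < N - 1 → ∀ w : E2, iteratedFDeriv ℝ k g1 z₀ (fun _ => w) = 0 := by
    intro k hk w
    rw [hdiag_g1 k w]
    refine Finset.sum_eq_zero fun j hj => ?_
    have hj' : j < k + 1 := Finset.mem_range.mp hj
    rw [hvan_a (j+1) (k-j) (by omega)]
    ring
  have hvan_g2 : ∀ k, k < N - 1 → ∀ w : E2, iteratedFDeriv ℝ k g2 z₀ (fun _ => w) = 0 := by
    intro k hk w
    rw [hdiag_g2 k w]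
    refine Finset.sum_eq_zero fun j hj => ?_
    have hj' : j < k + 1 := Finset.mem_range.mp hj
    rw [hvan_a j (k-j+1) (by omega)]
    ring
  have hvalN_g1 : ∀ w : E2, iteratedFDeriv ℝ (N-1) g1 z₀ (fun _ => w)
      = (c * (zc w)^(N-1)).re := by
    intro w
    rw [hdiag_g1 (N-1) w]
    refine poly_re (N-1) c (fun j => a (j+1) (N-1-j)) (fun j hj => ?_) w
    show a (j+1) (N-1-j) = (c * Complex.I ^ (N - 1 - j)).re
    rw [show N - 1 - j = N - (j+1) by omega]
    exact hco_b (j+1) (by omega)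
  have hvalN_g2 : ∀ w : E2, iteratedFDeriv ℝ (N-1) g2 z₀ (fun _ => w)
      = ((c * Complex.I) * (zc w)^(N-1)).re := by
    intro w
    rw [hdiag_g2 (N-1) w]
    refine poly_re (N-1) (c * Complex.I) (fun j => a j (N-1-j+1)) (fun j hj => ?_) w
    show a j (N-1-j+1) = (c * Complex.I * Complex.I ^ (N - 1 - j)).re
    rw [show N - 1 - j + 1 = N - j by omega]
    have e : c * Complex.I * Complex.I ^ (N - 1 - j) = c * Complex.I ^ (N - j) := by
      rw [show N - j = (N-1-j)+1 by omega, pow_succ]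
      ring
    rw [e]
    exact hco_b j (by omega)
  have hO1 : (fun y : E2 => g1 (z₀ + y) - ((N-1).factorial : ℝ)⁻¹ * (c * (zc y)^(N-1)).re)
      =O[𝓝 0] fun y => ‖y‖^N := by
    have h := taylor_bigO (hg1U z₀ hz₀U) (N-1) hvan_g1
    rw [show N - 1 + 1 = N by omega] at h
    simpa only [hvalN_g1] using h
  have hO2 : (fun y : E2 => g2 (z₀ + y) - ((N-1).factorial : ℝ)⁻¹ * ((c * Complex.I) * (zc y)^(N-1)).re)
      =O[𝓝 0] fun y => ‖y‖^N := by
    have h := taylor_bigO (hg2U z₀ hz₀U) (N-1) hvan_g2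
    rw [show N - 1 + 1 = N by omega] at h
    simpa only [hvalN_g2] using h
  -- extract explicit bounds
  obtain ⟨C0, hC0⟩ := hOu.bound
  rw [Metric.eventually_nhds_iff] at hC0
  obtain ⟨δ0, hδ0, hB0⟩ := hC0
  obtain ⟨C1, hC1⟩ := hO1.bound
  rw [Metric.eventually_nhds_iff] at hC1
  obtain ⟨δ1, hδ1, hB1⟩ := hC1
  obtain ⟨C2, hC2⟩ := hO2.bound
  rw [Metric.eventually_nhds_iff] at hC2
  obtain ⟨δ2, hδ2, hB2⟩ := hC2
  have habs : 0 < ‖c‖ := norm_pos_iff.mpr hcne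
  have hfacpos : (0:ℝ) < ((N-1).factorial : ℝ) := by positivity
  have hfacN : (0:ℝ) < (N.factorial : ℝ) := by positivity
  have hsign : ∀ σ : ℝ, σ = 1 ∨ σ = -1 → ∀ δ, 0 < δ →
      ∃ w : E2, dist w z₀ < δ ∧ 0 < σ * u w := by
    intro σ hσ δ hδ
    have hNpos : 0 < N := by omega
    obtain ⟨ζ, hζ⟩ := IsAlgClosed.exists_pow_nat_eq
      ((((σ * ‖c‖ : ℝ)) : ℂ) / c) hNpos
    have hσabs : |σ| = 1 := by rcases hσ with rfl | rfl <;> norm_num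
    have hσ2 : σ * σ = 1 := by rcases hσ with rfl | rfl <;> norm_num
    have hcz : c * ζ^N = (((σ * ‖c‖ : ℝ)) : ℂ) := by
      rw [hζ]
      field_simp
    have habsζ : ‖ζ‖ = 1 := by
      have h1 : (‖ζ‖)^N = 1 := by
        rw [← norm_pow, hζ, norm_div, Complex.norm_real, Real.norm_eq_abs, abs_mul, hσabs, one_mul,
          abs_of_nonneg habs.le, div_self habs.ne']
      rcases lt_trichotomy (‖ζ‖) 1 with h | h | h
      · exfalso
        have h2 := pow_lt_one₀ (norm_nonneg ζ) h hNpos.ne'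
        rw [h1] at h2
        exact lt_irrefl 1 h2
      · exact h
      · exfalso
        have h2 := one_lt_pow₀ h hNpos.ne'
        rw [h1] at h2
        exact lt_irrefl 1 h2
    set v : E2 := WithLp.toLp 2 (fun i : Fin 2 => if i = 0 then ζ.re else ζ.im) with hv
    have hv0 : v 0 = ζ.re := by simp [hv]
    have hv1 : v 1 = ζ.im := by simp [hv]
    have hzcv : zc v = ζ := by rw [zc, hv0, hv1, Complex.re_add_im]
    have hnv : ‖v‖ = 1 := by rw [← zc_abs, hzcv, habsζ]
    set K := max C0 1 with hK
    have hKpos : (0:ℝ) < K := lt_of_lt_of_le one_pos (le_max_right _ _)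
    set T := min (δ/2) (min (δ0/2) ((N.factorial : ℝ)⁻¹ * ‖c‖ / (2 * K))) with hT
    have hTpos : 0 < T :=
      lt_min (half_pos hδ) (lt_min (half_pos hδ0) (by positivity))
    have hnorm : ‖T • v‖ = T := by
      rw [norm_smul, hnv, mul_one, Real.norm_eq_abs, abs_of_pos hTpos]
    refine ⟨z₀ + T • v, ?_, ?_⟩
    · rw [dist_eq_norm, add_sub_cancel_left, hnorm]
      calc T ≤ δ/2 := min_le_left _ _
        _ < δ := by linarith
    · have hyd : dist (T • v) (0:E2) < δ0 := by
        rw [dist_zero_right, hnorm]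
        calc T ≤ δ0/2 := le_trans (min_le_right _ _) (min_le_left _ _)
          _ < δ0 := by linarith
      have hb := hB0 hyd
      have hval : (c * (zc (T • v))^N).re = T^N * (σ * ‖c‖) := by
        rw [zc_smul, hzcv, mul_pow,
          show c * ((T:ℂ)^N * ζ^N) = (T:ℂ)^N * (c * ζ^N) by ring, hcz]
        have : ((T:ℂ))^N * (((σ * ‖c‖ : ℝ)) : ℂ)
            = (((T^N * (σ * ‖c‖)) : ℝ) : ℂ) := by push_cast; ring
        rw [this, Complex.ofReal_re]
      rw [hval, hnorm] at hb
      have hnormN : ‖T^(N+1)‖ = T^(N+1) := by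
        rw [Real.norm_eq_abs, abs_of_nonneg (by positivity)]
      rw [hnormN] at hb
      set m := (N.factorial : ℝ)⁻¹ * (T^N * (σ * ‖c‖)) with hm
      have hbb : |u (z₀ + T • v) - m| ≤ K * T^(N+1) := by
        have h1 : ‖u (z₀ + T • v) - m‖ ≤ C0 * T^(N+1) := hb
        rw [Real.norm_eq_abs] at h1
        calc |u (z₀ + T • v) - m| ≤ C0 * T^(N+1) := h1
          _ ≤ K * T^(N+1) := mul_le_mul_of_nonneg_right (le_max_left _ _) (by positivity)
      have habs' := abs_le.mp hbb
      have hσdiff : -(K * T^(N+1)) ≤ σ * (u (z₀ + T • v) - m) := by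
        rcases hσ with rfl | rfl
        · rw [one_mul]; exact habs'.1
        · have := habs'.2; linarith
      have hσm : σ * m = (N.factorial : ℝ)⁻¹ * T^N * ‖c‖ := by
        rw [hm, show σ * ((N.factorial : ℝ)⁻¹ * (T^N * (σ * ‖c‖)))
          = (σ * σ) * ((N.factorial : ℝ)⁻¹ * T^N * ‖c‖) by ring, hσ2, one_mul]
      have hTK : K * T ≤ (N.factorial : ℝ)⁻¹ * ‖c‖ / 2 := by
        have hTle : T ≤ (N.factorial : ℝ)⁻¹ * ‖c‖ / (2 * K) :=
          le_trans (min_le_right _ _) (min_le_right _ _)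
        calc K * T ≤ K * ((N.factorial : ℝ)⁻¹ * ‖c‖ / (2 * K)) :=
              mul_le_mul_of_nonneg_left hTle hKpos.le
          _ = (N.factorial : ℝ)⁻¹ * ‖c‖ / 2 := by field_simp
      have hpow : T^(N+1) = T^N * T := pow_succ T N
      have h3 : K * T^(N+1) ≤ ((N.factorial : ℝ)⁻¹ * ‖c‖ / 2) * T^N := by
        rw [hpow, show K * (T^N * T) = (K * T) * T^N by ring]
        exact mul_le_mul_of_nonneg_right hTK (pow_pos hTpos N).le
      have hTN : 0 < T^N := pow_pos hTpos N
      have hfinal : 0 < ((N.factorial : ℝ)⁻¹ * ‖c‖ / 2) * T^N := by positivity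
      have hexp : σ * u (z₀ + T • v) = σ * m + σ * (u (z₀ + T • v) - m) := by ring
      rw [hexp, hσm]
      have : (N.factorial : ℝ)⁻¹ * T^N * ‖c‖
          = ((N.factorial : ℝ)⁻¹ * ‖c‖ / 2) * T^N
            + ((N.factorial : ℝ)⁻¹ * ‖c‖ / 2) * T^N := by ring
      linarith
  refine ⟨?_, ?_, ?_⟩
  · -- isolated critical point
    set M := max (((N-1).factorial : ℝ) * (C1 + C2)) 1 with hMdef
    have hM1 : (1:ℝ) ≤ M := le_max_right _ _
    have hMpos : (0:ℝ) < M := lt_of_lt_of_le one_pos hM1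
    refine ⟨min (min δ1 δ2) (‖c‖ / M), lt_min (lt_min hδ1 hδ2) (div_pos habs hMpos), ?_⟩
    intro w hw hgw
    by_contra hne'
    set y : E2 := w - z₀ with hy
    have hy0 : y ≠ 0 := sub_ne_zero.mpr hne'
    have hyn : 0 < ‖y‖ := norm_pos_iff.mpr hy0
    have hwy : z₀ + y = w := by rw [hy]; abel
    have hdist : ‖y‖ < min (min δ1 δ2) (‖c‖ / M) := by
      rw [hy, ← dist_eq_norm]
      exact mem_ball.mp hw
    have hd1 : dist y 0 < δ1 := by
      rw [dist_zero_right]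
      exact lt_of_lt_of_le hdist (le_trans (min_le_left _ _) (min_le_left _ _))
    have hd2 : dist y 0 < δ2 := by
      rw [dist_zero_right]
      exact lt_of_lt_of_le hdist (le_trans (min_le_left _ _) (min_le_right _ _))
    have hfd : fderiv ℝ u w = 0 := grad_zero_fderiv hgw
    have hg1w : g1 w = 0 := by
      rw [hg1def]
      show fderiv ℝ u w (ee 0) = 0
      rw [hfd]; rfl
    have hg2w : g2 w = 0 := by
      rw [hg2def]
      show fderiv ℝ u w (ee 1) = 0
      rw [hfd]; rfl
    have hbound1 := hB1 hd1
    have hbound2 := hB2 hd2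
    rw [hwy] at hbound1 hbound2
    rw [hg1w] at hbound1
    rw [hg2w] at hbound2
    have hnormN : ‖‖y‖^N‖ = ‖y‖^N := by
      rw [Real.norm_eq_abs, abs_of_nonneg (by positivity)]
    have hA : |(c * (zc y)^(N-1)).re| ≤ ((N-1).factorial : ℝ) * C1 * ‖y‖^N := by
      have h1 : ‖(0:ℝ) - (((N-1).factorial : ℝ))⁻¹ * (c * (zc y)^(N-1)).re‖
          ≤ C1 * ‖‖y‖^N‖ := hbound1
      have h3 : ‖(0:ℝ) - (((N-1).factorial : ℝ))⁻¹ * (c * (zc y)^(N-1)).re‖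
          = (((N-1).factorial : ℝ))⁻¹ * |(c * (zc y)^(N-1)).re| := by
        rw [zero_sub, norm_neg, Real.norm_eq_abs, abs_mul, abs_of_pos (inv_pos.mpr hfacpos)]
      rw [h3, hnormN] at h1
      have h4 := mul_le_mul_of_nonneg_left h1 hfacpos.le
      rw [← mul_assoc, mul_inv_cancel₀ hfacpos.ne', one_mul] at h4
      linarith
    have hB : |(c * (zc y)^(N-1)).im| ≤ ((N-1).factorial : ℝ) * C2 * ‖y‖^N := by
      have h1 : ‖(0:ℝ) - (((N-1).factorial : ℝ))⁻¹ * ((c * Complex.I) * (zc y)^(N-1)).re‖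
          ≤ C2 * ‖‖y‖^N‖ := hbound2
      have him : ((c * Complex.I) * (zc y)^(N-1)).re = -((c * (zc y)^(N-1)).im) := by
        rw [show (c * Complex.I) * (zc y)^(N-1) = (c * (zc y)^(N-1)) * Complex.I by ring,
          Complex.mul_I_re]
      rw [him] at h1
      have h3 : ‖(0:ℝ) - (((N-1).factorial : ℝ))⁻¹ * -((c * (zc y)^(N-1)).im)‖
          = (((N-1).factorial : ℝ))⁻¹ * |(c * (zc y)^(N-1)).im| := by
        rw [zero_sub, norm_neg, Real.norm_eq_abs, abs_mul, abs_neg,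
          abs_of_pos (inv_pos.mpr hfacpos)]
      rw [h3, hnormN] at h1
      have h4 := mul_le_mul_of_nonneg_left h1 hfacpos.le
      rw [← mul_assoc, mul_inv_cancel₀ hfacpos.ne', one_mul] at h4
      linarith
    have hkey : ‖c‖ * ‖y‖^(N-1) ≤ M * ‖y‖^N := by
      calc ‖c‖ * ‖y‖^(N-1)
          = ‖c * (zc y)^(N-1)‖ := by
            rw [norm_mul, norm_pow, zc_abs]
        _ ≤ |(c * (zc y)^(N-1)).re| + |(c * (zc y)^(N-1)).im| :=
            Complex.norm_le_abs_re_add_abs_im _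
        _ ≤ ((N-1).factorial : ℝ) * C1 * ‖y‖^N + ((N-1).factorial : ℝ) * C2 * ‖y‖^N := by
            linarith
        _ = (((N-1).factorial : ℝ) * (C1 + C2)) * ‖y‖^N := by ring
        _ ≤ M * ‖y‖^N := by
            apply mul_le_mul_of_nonneg_right (le_max_left _ _) (by positivity)
    have hNsplit : ‖y‖^N = ‖y‖ * ‖y‖^(N-1) := by
      conv_lhs => rw [show N = (N-1) + 1 by omega]
      rw [pow_succ]
      ring
    rw [hNsplit] at hkey
    have hcM : ‖c‖ ≤ M * ‖y‖ := by
      have h' : ‖c‖ * ‖y‖^(N-1) ≤ (M * ‖y‖) * ‖y‖^(N-1) := by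
        calc ‖c‖ * ‖y‖^(N-1) ≤ M * (‖y‖ * ‖y‖^(N-1)) := hkey
          _ = (M * ‖y‖) * ‖y‖^(N-1) := by ring
      exact le_of_mul_le_mul_right h' (by positivity)
    have hsmall : ‖y‖ < ‖c‖ / M :=
      lt_of_lt_of_le hdist (min_le_right _ _)
    rw [lt_div_iff₀ hMpos] at hsmall
    have hcomm : M * ‖y‖ = ‖y‖ * M := mul_comm _ _
    linarith
  · -- not a local min
    intro hmin
    have hev : ∀ᶠ x in 𝓝 z₀, u z₀ ≤ u x := hmin
    rw [Metric.eventually_nhds_iff] at hev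
    obtain ⟨δm, hδm, hmle⟩ := hev
    obtain ⟨w, hwd, hwpos⟩ := hsign (-1) (Or.inr rfl) δm hδm
    have h1 := hmle hwd
    rw [hu0] at h1
    linarith
  · -- not a local max
    intro hmax
    have hev : ∀ᶠ x in 𝓝 z₀, u x ≤ u z₀ := hmax
    rw [Metric.eventually_nhds_iff] at hev
    obtain ⟨δm, hδm, hmle⟩ := hev
    obtain ⟨w, hwd, hwpos⟩ := hsign 1 (Or.inl rfl) δm hδm
    have h1 := hmle hwd
    rw [hu0] at h1
    linarith
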